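/- Let A ∈ ℝ^{k×N} be a nonnegative matrix and s a positive integer with (k+1)·s < N. Suppose there exist λ_1,…,λ_T > 0, sets S_1,…,S_T ⊆ [N] with |S_t| ≤ s, scalars y_t^{(0)} ∈ ℝ and row vectors y_t ∈ ℝ^k such that for each t, y_t^{(0)}·𝟙_{[N]} + y_t·A ≤ 𝟙_{S_t} (coordinatewise), Σ_t λ_t y_t ≥ 0 (coordinatewise in ℝ^k), and Σ_t λ_t y_t^{(0)} > 0, with T ≤ k+1. Then a contradiction follows; i.e., no such certificate exists. -/
import Mathlib


/-- No Farkas-type infeasibility certificate exists when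
(k+1)·s < N: positive multipliers λ_t, sets S_t of size ≤ s, scalars y0_t and
row vectors y_t with y0_t·𝟙 + y_t·A ≤ 𝟙_{S_t}, Σ λ_t y_t ≥ 0 and
Σ λ_t y0_t > 0 (with T ≤ k+1) lead to a contradiction. -/
theorem stmt1 (N k s T : ℕ) (hs : 0 < s) (hN : (k + 1) * s < N) (hT : T ≤ k + 1)
    (A : Matrix (Fin k) (Fin N) ℝ) (hA : ∀ i j, 0 ≤ A i j)
    (lam : Fin T → ℝ) (hlam : ∀ t, 0 < lam t)
    (S : Fin T → Finset (Fin N)) (hS : ∀ t, (S t).card ≤ s)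
    (y0 : Fin T → ℝ) (y : Fin T → Fin k → ℝ)
    (hineq : ∀ t, ∀ j : Fin N,
      y0 t + ∑ i, y t i * A i j ≤ if j ∈ S t then 1 else 0)
    (hpos : ∀ i : Fin k, 0 ≤ ∑ t, lam t * y t i)
    (hobj : 0 < ∑ t, lam t * y0 t) :
    False := by
  -- the union of the S t has fewer than N elements
  have hcard : ((Finset.univ : Finset (Fin T)).biUnion S).card < N := by
    calc ((Finset.univ : Finset (Fin T)).biUnion S).card
        ≤ ∑ t, (S t).card := Finset.card_biUnion_le
      _ ≤ ∑ _t : Fin T, s := Finset.sum_le_sum fun t _ => hS t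
      _ = T * s := by simp [Finset.sum_const, Finset.card_univ, mul_comm]
      _ ≤ (k + 1) * s := Nat.mul_le_mul_right s hT
      _ < N := hN
  obtain ⟨j, hj⟩ : ∃ j : Fin N, j ∉ (Finset.univ : Finset (Fin T)).biUnion S := by
    by_contra h
    push_neg at h
    have : (Finset.univ : Finset (Fin N)) ⊆ (Finset.univ : Finset (Fin T)).biUnion S :=
      fun x _ => h x
    have := Finset.card_le_card this
    simp [Finset.card_univ] at this
    omega
  have hjt : ∀ t, j ∉ S t := by
    intro t ht
    exact hj (Finset.mem_biUnion.mpr ⟨t, Finset.mem_univ t, ht⟩)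
  have h1 : ∀ t, lam t * (y0 t + ∑ i, y t i * A i j) ≤ 0 := by
    intro t
    have := hineq t j
    rw [if_neg (hjt t)] at this
    exact mul_nonpos_of_nonneg_of_nonpos (hlam t).le this
  have h2 : ∑ t, lam t * (y0 t + ∑ i, y t i * A i j) ≤ 0 :=
    Finset.sum_nonpos fun t _ => h1 t
  have h3 : ∑ t, lam t * (y0 t + ∑ i, y t i * A i j)
      = (∑ t, lam t * y0 t) + ∑ i, (∑ t, lam t * y t i) * A i j := by
    simp only [mul_add, Finset.mul_sum, Finset.sum_add_distrib, Finset.sum_mul, mul_assoc]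
    rw [Finset.sum_comm]
  have h4 : 0 ≤ ∑ i, (∑ t, lam t * y t i) * A i j :=
    Finset.sum_nonneg fun i _ => mul_nonneg (hpos i) (hA i j)
  rw [h3] at h2
  linarith
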